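/- Under Condition on the energy landscape (unique stable state x₀, metastable set {x₁¹,...,x₁ⁿ, x₂} with H(x₂) > H(x₁ʳ), all H(x₁ʳ) equal, and Φ(x₁ʳ,x₁^q) - H(x₁ʳ) < Γ_m), the communication costs satisfy Φ(x₂,x₀) - H(x₂) = Φ(x₁ʳ,x₀) - H(x₁ʳ) = Γ_m for every r = 1,...,n. -/

import Mathlib

open Filter Topology
open scoped Classical

/-- Height along a path starting at `x` with subsequent states `l`. -/
def pathHeight {S : Type*} (H : S → ℝ) (Δ : S → S → ℝ) : S → List S → ℝ
  | x, [] => H x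
  | x, y :: l => max (H x + Δ x y) (pathHeight H Δ y l)

/-- Communication height between two states. -/
noncomputable def commHeight {S : Type*} (H : S → ℝ) (Δ : S → S → ℝ) (x y : S) : ℝ :=
  sInf {c | ∃ l : List S,
    (x :: l).getLast (List.cons_ne_nil x l) = y ∧ c = pathHeight H Δ x l}

/-- Communication height between a state and a set. -/
noncomputable def commSet {S : Type*} (H : S → ℝ) (Δ : S → S → ℝ) (x : S) (A : Set S) : ℝ :=
  sInf (commHeight H Δ x '' A)

/-- The states with energy strictly below that of `x`. -/
def Ibelow {S : Type*} (H : S → ℝ) (x : S) : Set S := {y | H y < H x}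

/-- Stability level of a state. -/
noncomputable def stabLevel {S : Type*} (H : S → ℝ) (Δ : S → S → ℝ) (x : S) : ℝ :=
  commSet H Δ x (Ibelow H x) - H x

/-- Ground states: global minima of the energy. -/
def stableSet {S : Type*} (H : S → ℝ) : Set S := {x | ∀ y, H x ≤ H y}

/-- Maximal stability level among non-stable states. -/
noncomputable def gammaM {S : Type*} (H : S → ℝ) (Δ : S → S → ℝ) : ℝ :=
  sSup (stabLevel H Δ '' (stableSet H)ᶜ)

/-- Metastable states: non-stable states attaining the maximal stability level. -/
def metaSet {S : Type*} (H : S → ℝ) (Δ : S → S → ℝ) : Set S :=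
  {x | x ∉ stableSet H ∧ stabLevel H Δ x = gammaM H Δ}

set_option linter.unusedSectionVars false
set_option linter.unusedVariables false

section Aux
variable {S : Type*} [Fintype S] (H : S → ℝ) (Δ : S → S → ℝ)

def commPaths (x y : S) : Set ℝ :=
  {c | ∃ l : List S, (x :: l).getLast (List.cons_ne_nil x l) = y ∧ c = pathHeight H Δ x l}

lemma commHeight_def (x y : S) : commHeight H Δ x y = sInf (commPaths H Δ x y) := rfl

lemma commPaths_nonempty (x y : S) : (commPaths H Δ x y).Nonempty :=
  ⟨pathHeight H Δ x [y], [y], by simp, rfl⟩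

lemma pathHeight_mem (x : S) (l : List S) :
    pathHeight H Δ x l ∈ Set.range H ∪ Set.range (fun p : S × S => H p.1 + Δ p.1 p.2) := by
  induction l generalizing x with
  | nil => exact Or.inl ⟨x, rfl⟩
  | cons y t ih =>
    rcases max_choice (H x + Δ x y) (pathHeight H Δ y t) with h | h
    · rw [pathHeight, h]; exact Or.inr ⟨(x, y), rfl⟩
    · rw [pathHeight, h]; exact ih y

lemma commPaths_finite (x y : S) : (commPaths H Δ x y).Finite :=
  ((Set.finite_range H).union (Set.finite_range _)).subset
    (by rintro c ⟨l, -, rfl⟩; exact pathHeight_mem H Δ x l)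

lemma commHeight_mem (x y : S) : commHeight H Δ x y ∈ commPaths H Δ x y :=
  (commPaths_nonempty H Δ x y).csInf_mem (commPaths_finite H Δ x y)

lemma commHeight_le_path (x y : S) (l : List S)
    (h : (x :: l).getLast (List.cons_ne_nil x l) = y) :
    commHeight H Δ x y ≤ pathHeight H Δ x l :=
  csInf_le (commPaths_finite H Δ x y).bddBelow ⟨l, h, rfl⟩

lemma le_pathHeight (hΔ : ∀ x y, 0 ≤ Δ x y) (x : S) (l : List S) : H x ≤ pathHeight H Δ x l := by
  cases l with
  | nil => exact le_refl _
  | cons y t => exact le_max_of_le_left (by linarith [hΔ x y])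

lemma le_commHeight (hΔ : ∀ x y, 0 ≤ Δ x y) (x y : S) : H x ≤ commHeight H Δ x y :=
  le_csInf (commPaths_nonempty H Δ x y) (by rintro c ⟨l, -, rfl⟩; exact le_pathHeight H Δ hΔ x l)

lemma commHeight_self_le (x : S) : commHeight H Δ x x ≤ H x :=
  commHeight_le_path H Δ x x [] rfl

lemma pathHeight_append (hΔ : ∀ x y, 0 ≤ Δ x y) (l₁ : List S) :
    ∀ (x y : S), (x :: l₁).getLast (List.cons_ne_nil x l₁) = y →
    ∀ l₂ : List S, pathHeight H Δ x (l₁ ++ l₂) = max (pathHeight H Δ x l₁) (pathHeight H Δ y l₂) := by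
  induction l₁ with
  | nil =>
    intro x y h l₂
    simp at h
    subst h
    simp [pathHeight, max_eq_right (le_pathHeight H Δ hΔ x l₂)]
  | cons a t ih =>
    intro x y h l₂
    have h' : (a :: t).getLast (List.cons_ne_nil a t) = y := by
      rwa [List.getLast_cons (List.cons_ne_nil a t)] at h
    show max (H x + Δ x a) (pathHeight H Δ a (t ++ l₂)) = _
    rw [ih a y h' l₂]
    rw [← max_assoc]
    rfl

lemma commHeight_trans (hΔ : ∀ x y, 0 ≤ Δ x y) (x y z : S) :
    commHeight H Δ x z ≤ max (commHeight H Δ x y) (commHeight H Δ y z) := by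
  obtain ⟨l₁, h₁, e₁⟩ := commHeight_mem H Δ x y
  obtain ⟨l₂, h₂, e₂⟩ := commHeight_mem H Δ y z
  cases l₂ with
  | nil =>
    simp at h₂
    subst h₂
    exact le_max_left _ _
  | cons b t =>
    have hq : (b :: t).getLast? = some z := by
      rw [List.getLast_cons (List.cons_ne_nil b t)] at h₂
      rw [List.getLast?_eq_getLast (List.cons_ne_nil b t), h₂]
    have h? : (x :: (l₁ ++ b :: t)).getLast? = some z := by
      rw [show x :: (l₁ ++ b :: t) = (x :: l₁) ++ (b :: t) from rfl]
      rw [List.getLast?_append, hq]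
      rfl
    have hlast : ((x :: (l₁ ++ b :: t)).getLast (List.cons_ne_nil _ _)) = z := by
      rw [List.getLast?_eq_getLast (List.cons_ne_nil _ _)] at h?
      exact Option.some_injective _ h?
    calc commHeight H Δ x z ≤ pathHeight H Δ x (l₁ ++ b :: t) :=
          commHeight_le_path H Δ x z _ hlast
      _ = max (pathHeight H Δ x l₁) (pathHeight H Δ y (b :: t)) :=
          pathHeight_append H Δ hΔ l₁ x y h₁ (b :: t)
      _ = max (commHeight H Δ x y) (commHeight H Δ y z) := by rw [e₁, e₂]

end Aux

section Main
variable {S : Type*} [Fintype S] (H : S → ℝ) (Δ : S → S → ℝ)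

lemma nonstable_iff (x : S) : x ∉ stableSet H ↔ ∃ y, H y < H x := by
  simp [stableSet, not_forall, not_le]

lemma commSet_mem {x : S} {A : Set S} (hA : A.Nonempty) :
    ∃ y ∈ A, commHeight H Δ x y = commSet H Δ x A := by
  have hfin : (commHeight H Δ x '' A).Finite := (A.toFinite).image _
  obtain ⟨y, hy, e⟩ := (hA.image _).csInf_mem hfin
  exact ⟨y, hy, e⟩

lemma commSet_le {x y : S} {A : Set S} (hy : y ∈ A) :
    commSet H Δ x A ≤ commHeight H Δ x y :=
  csInf_le ((A.toFinite.image _).bddBelow) (Set.mem_image_of_mem _ hy)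

lemma stabLevel_le_gammaM {x : S} (hx : x ∉ stableSet H) :
    stabLevel H Δ x ≤ gammaM H Δ :=
  le_csSup ((((stableSet H)ᶜ).toFinite.image _).bddAbove) ⟨x, hx, rfl⟩

lemma stabLevel_nonneg (hΔ : ∀ x y, 0 ≤ Δ x y) {x : S} (hx : x ∉ stableSet H) :
    0 ≤ stabLevel H Δ x := by
  obtain ⟨w, hw⟩ := (nonstable_iff H x).mp hx
  have hne : (Ibelow H x).Nonempty := ⟨w, hw⟩
  have : H x ≤ commSet H Δ x (Ibelow H x) := by
    refine le_csInf (hne.image _) ?_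
    rintro c ⟨y, -, rfl⟩
    exact le_commHeight H Δ hΔ x y
  simpa [stabLevel] using this

lemma descent (hΔ : ∀ x y, 0 ≤ Δ x y) (x₀ : S) (hS : stableSet H = {x₀})
    (hΓ : 0 ≤ gammaM H Δ) :
    ∀ k : ℕ, ∀ x : S, (Finset.univ.filter (fun z => H z < H x)).card ≤ k →
      commHeight H Δ x x₀ ≤ gammaM H Δ + H x := by
  intro k
  induction k with
  | zero =>
    intro x hx
    have hxs : x ∈ stableSet H := by
      by_contra hns
      obtain ⟨y, hy⟩ := (nonstable_iff H x).mp hns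
      have : y ∈ Finset.univ.filter (fun z => H z < H x) := by simp [hy]
      have := Finset.card_pos.mpr ⟨y, this⟩
      omega
    have hx0 : x = x₀ := by rw [hS] at hxs; exact hxs
    rw [hx0]
    linarith [commHeight_self_le H Δ x₀, hx0 ▸ le_refl (H x)]
  | succ k ih =>
    intro x hx
    by_cases hx0 : x = x₀
    · rw [hx0]; linarith [commHeight_self_le H Δ x₀]
    · have hns : x ∉ stableSet H := by rw [hS]; simpa using hx0
      obtain ⟨w, hw⟩ := (nonstable_iff H x).mp hns
      obtain ⟨y, hy, e⟩ := commSet_mem H Δ (x := x) (A := Ibelow H x) ⟨w, hw⟩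
      have hylt : H y < H x := hy
      have h1 : commHeight H Δ x y ≤ gammaM H Δ + H x := by
        have := stabLevel_le_gammaM H Δ hns
        rw [e]
        unfold stabLevel at this
        linarith
      have hcard : (Finset.univ.filter (fun z => H z < H y)).card ≤ k := by
        have hss : Finset.univ.filter (fun z => H z < H y) ⊂
            Finset.univ.filter (fun z => H z < H x) := by
          refine Finset.ssubset_iff_of_subset ?_ |>.mpr ⟨y, by simp [hylt], by simp⟩
          intro z hz
          simp only [Finset.mem_filter, Finset.mem_univ, true_and] at hz ⊢
          exact hz.trans hylt
        have := Finset.card_lt_card hss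
        omega
      have h2 : commHeight H Δ y x₀ ≤ gammaM H Δ + H x :=
        (ih y hcard).trans (by linarith)
      calc commHeight H Δ x x₀ ≤ max (commHeight H Δ x y) (commHeight H Δ y x₀) :=
            commHeight_trans H Δ hΔ x y x₀
        _ ≤ gammaM H Δ + H x := max_le h1 h2

lemma meta_comm (hΔ : ∀ x y, 0 ≤ Δ x y) (x₀ : S) (hS : stableSet H = {x₀})
    (hΓ : 0 ≤ gammaM H Δ) {x : S} (hx : x ∈ metaSet H Δ) :
    commHeight H Δ x x₀ - H x = gammaM H Δ := by
  obtain ⟨hns, hsl⟩ := hx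
  have hx0s : x₀ ∈ stableSet H := by rw [hS]; rfl
  obtain ⟨w, hw⟩ := (nonstable_iff H x).mp hns
  have hx₀ : x₀ ∈ Ibelow H x := lt_of_le_of_lt (hx0s w) hw
  have low : commSet H Δ x (Ibelow H x) ≤ commHeight H Δ x x₀ := commSet_le H Δ hx₀
  have up : commHeight H Δ x x₀ ≤ gammaM H Δ + H x :=
    descent H Δ hΔ x₀ hS hΓ _ x le_rfl
  unfold stabLevel at hsl
  linarith

end Main

/-- Under the degenerate series condition, the communication cost from `x₂` to `x₀`
and from each `x₁ r` to `x₀` equals `Γ_m`. -/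
theorem comm_cost_to_stable_eq_gammaM {S : Type*} [Fintype S]
    (H : S → ℝ) (Δ : S → S → ℝ)
    (hΔ : ∀ x y, 0 ≤ Δ x y) (hrev : ∀ x y, H x + Δ x y = H y + Δ y x)
    (n : ℕ) (hn : 1 ≤ n) (x₀ x₂ : S) (x₁ : Fin n → S)
    (hinj : Function.Injective x₁)
    (hS : stableSet H = {x₀})
    (hM : metaSet H Δ = insert x₂ (Set.range x₁))
    (hE2 : ∀ r, H (x₁ r) < H x₂)
    (hEq : ∀ r q, H (x₁ r) = H (x₁ q))
    (hBar : ∀ r q, commHeight H Δ (x₁ r) (x₁ q) - H (x₁ r) < gammaM H Δ) :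
    commHeight H Δ x₂ x₀ - H x₂ = gammaM H Δ ∧
    ∀ r, commHeight H Δ (x₁ r) x₀ - H (x₁ r) = gammaM H Δ := by
  have hx₂ : x₂ ∈ metaSet H Δ := by rw [hM]; exact Set.mem_insert _ _
  obtain ⟨hns₂, hsl₂⟩ := hx₂
  have hΓ : 0 ≤ gammaM H Δ := hsl₂ ▸ stabLevel_nonneg H Δ hΔ hns₂
  refine ⟨meta_comm H Δ hΔ x₀ hS hΓ ⟨hns₂, hsl₂⟩, fun r => ?_⟩
  have hr : x₁ r ∈ metaSet H Δ := by
    rw [hM]; exact Set.mem_insert_of_mem _ ⟨r, rfl⟩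
  exact meta_comm H Δ hΔ x₀ hS hΓ hr
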